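/- Let T : C → C be nonexpansive on a nonempty closed convex subset C of a real Hilbert space with Fix(T) ≠ ∅. Then I − T is demiclosed at 0: if (xₙ) ⊆ C converges weakly to p and xₙ − Txₙ → 0 strongly, then p ∈ Fix(T). -/

import Mathlib

open RealInnerProductSpace

theorem stmt_4 {H : Type*} [NormedAddCommGroup H] [InnerProductSpace ℝ H] [CompleteSpace H]
    (C : Set H) (hC : C.Nonempty) (hCc : IsClosed C) (hCv : Convex ℝ C)
    (T : H → H) (hT : Set.MapsTo T C C)
    (hne : ∀ x ∈ C, ∀ y ∈ C, ‖T x - T y‖ ≤ ‖x - y‖)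
    (hFix : ∃ z ∈ C, T z = z)
    (x : ℕ → H) (hxC : ∀ n, x n ∈ C) (p : H)
    (hweak : ∀ y : H, Filter.Tendsto (fun n => (inner ℝ (x n - p) y : ℝ)) Filter.atTop (nhds 0))
    (hstrong : Filter.Tendsto (fun n => x n - T (x n)) Filter.atTop (nhds 0)) :
    p ∈ C ∧ T p = p := by
  -- Step 1: p ∈ C
  obtain ⟨q, hqC, hq⟩ := exists_norm_eq_iInf_of_complete_convex hC hCc.isComplete hCv p
  have hproj : ∀ w ∈ C, (inner ℝ (p - q) (w - q) : ℝ) ≤ 0 :=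
    (norm_eq_iInf_iff_real_inner_le_zero hCv hqC).1 hq
  have hpq : p = q := by
    have h1 : Filter.Tendsto (fun n => (inner ℝ (p - q) (x n - q) : ℝ)) Filter.atTop
        (nhds (‖p - q‖ ^ 2)) := by
      have : ∀ n, (inner ℝ (p - q) (x n - q) : ℝ) = (inner ℝ (x n - p) (p - q) : ℝ) + ‖p - q‖ ^ 2 := by
        intro n
        rw [real_inner_comm]
        have : x n - q = (x n - p) + (p - q) := by abel
        rw [this, inner_add_left, real_inner_self_eq_norm_sq]
      simp only [this]
      simpa using (hweak (p - q)).add tendsto_const_nhds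
    have h2 : ‖p - q‖ ^ 2 ≤ 0 :=
      le_of_tendsto h1 (Filter.Eventually.of_forall fun n => hproj _ (hxC n))
    have : ‖p - q‖ = 0 := by nlinarith [norm_nonneg (p - q), sq_nonneg ‖p - q‖]
    rw [← sub_eq_zero]; exact norm_eq_zero.1 this
  have hpC : p ∈ C := hpq ▸ hqC
  refine ⟨hpC, ?_⟩
  -- Step 2: boundedness via Banach–Steinhaus
  obtain ⟨M, hM⟩ : ∃ M, ∀ n, ‖x n - p‖ ≤ M := by
    obtain ⟨M, hM⟩ := banach_steinhaus (g := fun n => innerSL ℝ (x n - p)) (fun y => by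
      obtain ⟨B, hB⟩ := (hweak y).norm.bddAbove_range
      exact ⟨B, fun n => hB (Set.mem_range_self n)⟩)
    exact ⟨M, fun n => innerSL_apply_norm (𝕜 := ℝ) (x n - p) ▸ hM n⟩
  -- Step 3: T p = p
  set ε : ℕ → ℝ := fun n => ‖x n - T (x n)‖ with hε
  have hε0 : Filter.Tendsto ε Filter.atTop (nhds 0) := by
    simpa using hstrong.norm
  have key : ∀ n, 2 * (inner ℝ (x n - p) (p - T p) : ℝ) + ‖p - T p‖ ^ 2 ≤ ε n ^ 2 + 2 * ε n * M := by
    intro n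
    have h1 : ‖x n - T p‖ ≤ ε n + ‖x n - p‖ := by
      calc ‖x n - T p‖ ≤ ‖x n - T (x n)‖ + ‖T (x n) - T p‖ := by
            simpa using norm_sub_le_norm_sub_add_norm_sub (x n) (T (x n)) (T p)
        _ ≤ ε n + ‖x n - p‖ := by
            exact add_le_add le_rfl (hne _ (hxC n) _ hpC)
    have h2 : ‖x n - T p‖ ^ 2 = ‖x n - p‖ ^ 2 + 2 * (inner ℝ (x n - p) (p - T p) : ℝ) + ‖p - T p‖ ^ 2 := by
      have : x n - T p = (x n - p) + (p - T p) := by abel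
      rw [this, norm_add_sq_real]
    have hεn : 0 ≤ ε n := norm_nonneg _
    nlinarith [norm_nonneg (x n - T p), norm_nonneg (x n - p), hM n,
      sq_nonneg (‖x n - T p‖ - (ε n + ‖x n - p‖))]
  have h3 : Filter.Tendsto (fun n => 2 * (inner ℝ (x n - p) (p - T p) : ℝ) + ‖p - T p‖ ^ 2)
      Filter.atTop (nhds (‖p - T p‖ ^ 2)) := by
    simpa using ((hweak (p - T p)).const_mul 2).add (tendsto_const_nhds (x := ‖p - T p‖ ^ 2))
  have h4 : Filter.Tendsto (fun n => ε n ^ 2 + 2 * ε n * M) Filter.atTop (nhds 0) := by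
    have := ((hε0.pow 2).add (((hε0.const_mul 2)).mul_const M))
    simpa using this
  have h5 : ‖p - T p‖ ^ 2 ≤ 0 :=
    le_of_tendsto_of_tendsto' h3 h4 key
  have : ‖p - T p‖ = 0 := by nlinarith [norm_nonneg (p - T p)]
  exact (sub_eq_zero.1 (norm_eq_zero.1 this)).symm
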